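/- Wardrop equilibrium characterization (KKT sufficiency for Theorem 2): suppose y is primal-feasible, v : Fin T × Fin S → ℝ, and u_{tsa} = φ_{tsa}(y_{tsa}) with each φ_{tsa} continuous and increasing. If v_{Ts} = min_a u_{Tsa}, v_{ts} = min_a (u_{tsa} + ∑_{s'} P_{sas'} v_{t+1,s'}) for t < T, and y_{tsa} > 0 implies a attains the minimum in the corresponding expression, then y minimizes ∑_{t,s,a} ∫_0^{y_{tsa}} φ_{tsa}(α)dα over the primal-feasible set. -/

import Mathlib

open Finset

/-- Primal feasibility: nonnegative flow satisfying the Kolmogorov equations. -/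
def PrimalFeasible (T S A : ℕ) (hT : 0 < T)
    (p : Fin T → Fin S → ℝ) (P : Fin S → Fin A → Fin S → ℝ)
    (y : Fin T → Fin S → Fin A → ℝ) : Prop :=
  (∀ t s a, 0 ≤ y t s a) ∧
  (∀ s, ∑ a, y ⟨0, hT⟩ s a = p ⟨0, hT⟩ s) ∧
  (∀ (t : ℕ) (ht : t + 1 < T) (s : Fin S),
    ∑ a, y ⟨t + 1, ht⟩ s a
      = p ⟨t + 1, ht⟩ s
        + ∑ s', ∑ a, P s' a s * y ⟨t, lt_trans (Nat.lt_succ_self t) ht⟩ s' a)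

/-- Dual feasibility: Bellman inequalities. -/
def DualFeasible (T S A : ℕ) (hT : 0 < T)
    (c : Fin T → Fin S → Fin A → ℝ) (P : Fin S → Fin A → Fin S → ℝ)
    (v : Fin T → Fin S → ℝ) : Prop :=
  (∀ (s : Fin S) (a : Fin A),
    v ⟨T - 1, Nat.sub_lt hT one_pos⟩ s ≤ c ⟨T - 1, Nat.sub_lt hT one_pos⟩ s a) ∧
  (∀ (t : ℕ) (ht : t + 1 < T) (s : Fin S) (a : Fin A),
    v ⟨t, lt_trans (Nat.lt_succ_self t) ht⟩ s
      ≤ c ⟨t, lt_trans (Nat.lt_succ_self t) ht⟩ s a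
        + ∑ s', P s a s' * v ⟨t + 1, ht⟩ s')


lemma integral_ge_mul (f : ℝ → ℝ) (hc : Continuous f) (hm : Monotone f) (a b : ℝ) :
    f a * (b - a) ≤ ∫ x in a..b, f x := by
  rcases le_total a b with h | h
  · have h1 : (∫ x in a..b, f a) ≤ ∫ x in a..b, f x :=
      intervalIntegral.integral_mono_on h intervalIntegrable_const
        (hc.intervalIntegrable a b) (fun x hx => hm hx.1)
    simpa [intervalIntegral.integral_const, smul_eq_mul, mul_comm] using h1
  · have h1 : (∫ x in b..a, f x) ≤ ∫ x in b..a, f a :=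
      intervalIntegral.integral_mono_on h (hc.intervalIntegrable b a)
        intervalIntegrable_const (fun x hx => hm hx.2)
    rw [intervalIntegral.integral_symm]
    simp only [intervalIntegral.integral_const, smul_eq_mul] at h1 ⊢
    nlinarith


lemma telescope_id (T S A : ℕ) (hT : 0 < T)
    (p : Fin T → Fin S → ℝ) (P : Fin S → Fin A → Fin S → ℝ)
    (v : Fin T → Fin S → ℝ)
    (z : Fin T → Fin S → Fin A → ℝ)
    (hz0 : ∀ s, ∑ a, z ⟨0, hT⟩ s a = p ⟨0, hT⟩ s)
    (hzrec : ∀ (t : ℕ) (ht : t + 1 < T) (s : Fin S),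
      ∑ a, z ⟨t + 1, ht⟩ s a
        = p ⟨t + 1, ht⟩ s
          + ∑ s', ∑ a, P s' a s * z ⟨t, lt_trans (Nat.lt_succ_self t) ht⟩ s' a) :
    ∑ t : Fin T, ∑ s, ∑ a, z t s a * v t s
      = (∑ t : Fin T, ∑ s, p t s * v t s)
        + ∑ t : Fin T, ∑ s, ∑ a, z t s a *
            (if h : (t : ℕ) + 1 < T then ∑ s', P s a s' * v ⟨(t : ℕ) + 1, h⟩ s' else 0) := by
  obtain ⟨n, rfl⟩ : ∃ n, T = n + 1 := ⟨T - 1, by omega⟩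
  set F : ℕ → ℝ := fun t =>
    if h : t < n + 1 then ∑ s, ∑ a, z ⟨t, h⟩ s a * v ⟨t, h⟩ s else 0 with hF
  set G : ℕ → ℝ := fun t =>
    if h : t < n + 1 then ∑ s, p ⟨t, h⟩ s * v ⟨t, h⟩ s else 0 with hG
  set K : ℕ → ℝ := fun t =>
    if h : t + 1 < n + 1 then
      ∑ s, ∑ a, z ⟨t, lt_trans (Nat.lt_succ_self t) h⟩ s a *
        (∑ s', P s a s' * v ⟨t + 1, h⟩ s')
    else 0 with hK
  have e1 : ∑ t : Fin (n+1), ∑ s, ∑ a, z t s a * v t s = ∑ t ∈ Finset.range (n+1), F t := by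
    rw [← Fin.sum_univ_eq_sum_range]
    refine Finset.sum_congr rfl fun t _ => ?_
    simp [hF, t.2, Nat.lt_succ_iff.mp t.2]
  have e2 : ∑ t : Fin (n+1), ∑ s, p t s * v t s = ∑ t ∈ Finset.range (n+1), G t := by
    rw [← Fin.sum_univ_eq_sum_range]
    refine Finset.sum_congr rfl fun t _ => ?_
    simp [hG, t.2, Nat.lt_succ_iff.mp t.2]
  have e3 : (∑ t : Fin (n+1), ∑ s, ∑ a, z t s a *
      (if h : (t : ℕ) + 1 < n + 1 then ∑ s', P s a s' * v ⟨(t : ℕ) + 1, h⟩ s' else 0))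
      = ∑ t ∈ Finset.range (n+1), K t := by
    rw [← Fin.sum_univ_eq_sum_range]
    refine Finset.sum_congr rfl fun t _ => ?_
    by_cases h : (t : ℕ) + 1 < n + 1
    · simp only [hK]; rw [dif_pos h]
      refine Finset.sum_congr rfl fun s _ => Finset.sum_congr rfl fun a _ => ?_
      rw [dif_pos h]
    · simp only [hK]; rw [dif_neg h]
      refine (Finset.sum_eq_zero fun s _ => Finset.sum_eq_zero fun a _ => ?_)
      rw [dif_neg h, mul_zero]
  rw [e1, e2, e3]
  have hF0 : F 0 = G 0 := by
    simp only [hF, hG, dif_pos (Nat.succ_pos n)]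
    refine Finset.sum_congr rfl fun s _ => ?_
    rw [← Finset.sum_mul, hz0]
  have hFs : ∀ i ∈ Finset.range n, F (i + 1) = G (i + 1) + K i := by
    intro i hi
    have hi' : i + 1 < n + 1 := by simpa using Finset.mem_range.mp hi
    simp only [hF, hG, hK, dif_pos hi']
    rw [show (∑ s, ∑ a, z ⟨i+1, hi'⟩ s a * v ⟨i+1, hi'⟩ s)
        = ∑ s, (∑ a, z ⟨i+1, hi'⟩ s a) * v ⟨i+1, hi'⟩ s from
      Finset.sum_congr rfl fun s _ => (Finset.sum_mul ..).symm]
    rw [Finset.sum_congr rfl fun s _ => by rw [hzrec i hi' s]]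
    simp only [add_mul, Finset.sum_add_distrib]
    congr 1
    calc ∑ s, (∑ s', ∑ a, P s' a s * z ⟨i, lt_trans (Nat.lt_succ_self i) hi'⟩ s' a) * v ⟨i+1, hi'⟩ s
        = ∑ s, ∑ s', ∑ a, P s' a s * z ⟨i, lt_trans (Nat.lt_succ_self i) hi'⟩ s' a * v ⟨i+1, hi'⟩ s := by
          simp [Finset.sum_mul]
      _ = ∑ σ, ∑ s, ∑ a, P σ a s * z ⟨i, lt_trans (Nat.lt_succ_self i) hi'⟩ σ a * v ⟨i+1, hi'⟩ s :=
          Finset.sum_comm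
      _ = ∑ σ, ∑ a, ∑ s, P σ a s * z ⟨i, lt_trans (Nat.lt_succ_self i) hi'⟩ σ a * v ⟨i+1, hi'⟩ s :=
          Finset.sum_congr rfl (fun σ _ => Finset.sum_comm)
      _ = ∑ σ, ∑ a, z ⟨i, lt_trans (Nat.lt_succ_self i) hi'⟩ σ a * ∑ s, P σ a s * v ⟨i+1, hi'⟩ s := by
          refine Finset.sum_congr rfl fun σ _ => Finset.sum_congr rfl fun a _ => ?_
          rw [Finset.mul_sum]
          exact Finset.sum_congr rfl fun s _ => by ring
  have hKn : K n = 0 := by simp [hK]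
  rw [Finset.sum_range_succ' F n, Finset.sum_range_succ' G n, Finset.sum_range_succ K n,
    Finset.sum_congr rfl hFs, hF0, hKn, Finset.sum_add_distrib]
  ring

theorem wardrop_kkt_sufficiency
    (T S A : ℕ) (hT : 0 < T) (hS : 0 < S) (hA : 0 < A)
    (p : Fin T → Fin S → ℝ) (hp : ∀ t s, 0 ≤ p t s)
    (P : Fin S → Fin A → Fin S → ℝ)
    (hP : ∀ s a s', 0 ≤ P s a s')
    (hP1 : ∀ s a, ∑ s', P s a s' = 1)
    (φ : Fin T → Fin S → Fin A → ℝ → ℝ)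
    (hφc : ∀ t s a, Continuous (φ t s a))
    (hφm : ∀ t s a, Monotone (φ t s a))
    (y : Fin T → Fin S → Fin A → ℝ)
    (hy : PrimalFeasible T S A hT p P y)
    (u : Fin T → Fin S → Fin A → ℝ)
    (hu : ∀ t s a, u t s a = φ t s a (y t s a))
    (v : Fin T → Fin S → ℝ)
    (hvT : ∀ s : Fin S,
      IsLeast (Set.range fun a => u ⟨T - 1, Nat.sub_lt hT one_pos⟩ s a)
        (v ⟨T - 1, Nat.sub_lt hT one_pos⟩ s))
    (hvB : ∀ (t : ℕ) (ht : t + 1 < T) (s : Fin S),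
      IsLeast
        (Set.range fun a =>
          u ⟨t, lt_trans (Nat.lt_succ_self t) ht⟩ s a
            + ∑ s', P s a s' * v ⟨t + 1, ht⟩ s')
        (v ⟨t, lt_trans (Nat.lt_succ_self t) ht⟩ s))
    (hcsT : ∀ (s : Fin S) (a : Fin A),
      0 < y ⟨T - 1, Nat.sub_lt hT one_pos⟩ s a →
        v ⟨T - 1, Nat.sub_lt hT one_pos⟩ s = u ⟨T - 1, Nat.sub_lt hT one_pos⟩ s a)
    (hcs : ∀ (t : ℕ) (ht : t + 1 < T) (s : Fin S) (a : Fin A),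
      0 < y ⟨t, lt_trans (Nat.lt_succ_self t) ht⟩ s a →
        v ⟨t, lt_trans (Nat.lt_succ_self t) ht⟩ s
          = u ⟨t, lt_trans (Nat.lt_succ_self t) ht⟩ s a
            + ∑ s', P s a s' * v ⟨t + 1, ht⟩ s') :
    ∀ y', PrimalFeasible T S A hT p P y' →
      (∑ t, ∑ s, ∑ a, ∫ α in (0:ℝ)..(y t s a), φ t s a α)
        ≤ ∑ t, ∑ s, ∑ a, ∫ α in (0:ℝ)..(y' t s a), φ t s a α := by
  intro y' hy'
  obtain ⟨hy0, hyI, hyR⟩ := hy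
  obtain ⟨hy0', hyI', hyR'⟩ := hy'
  -- dual slack bound: v t s - w t s a ≤ u t s a
  have dual_le : ∀ (t : Fin T) (s : Fin S) (a : Fin A),
      v t s - (if h : (t : ℕ) + 1 < T then ∑ s', P s a s' * v ⟨(t : ℕ) + 1, h⟩ s' else 0)
        ≤ u t s a := by
    intro t s a
    by_cases h : (t : ℕ) + 1 < T
    · have hb : v t s ≤ u t s a + ∑ s', P s a s' * v ⟨(t : ℕ) + 1, h⟩ s' :=
        (hvB t h s).2 ⟨a, rfl⟩
      rw [dif_pos h]
      linarith
    · have ht1 : (t : ℕ) = T - 1 := by have := t.2; omega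
      have ht : t = ⟨T - 1, Nat.sub_lt hT one_pos⟩ := Fin.ext ht1
      rw [dif_neg h, sub_zero, ht]
      exact (hvT s).2 ⟨a, rfl⟩
  -- complementary slackness equality
  have cs_eq : ∀ (t : Fin T) (s : Fin S) (a : Fin A), 0 < y t s a →
      u t s a
        = v t s - (if h : (t : ℕ) + 1 < T then ∑ s', P s a s' * v ⟨(t : ℕ) + 1, h⟩ s' else 0) := by
    intro t s a hpos
    by_cases h : (t : ℕ) + 1 < T
    · have heq : (⟨(t : ℕ), lt_trans (Nat.lt_succ_self _) h⟩ : Fin T) = t := rfl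
      have hb := hcs t h s a (by rw [heq]; exact hpos)
      rw [heq] at hb
      rw [dif_pos h]
      linarith
    · have ht1 : (t : ℕ) = T - 1 := by have := t.2; omega
      have ht : t = ⟨T - 1, Nat.sub_lt hT one_pos⟩ := Fin.ext ht1
      rw [dif_neg h, sub_zero, ht]
      exact (hcsT s a (by rw [← ht]; exact hpos)).symm
  -- telescoping identities
  have Ty := telescope_id T S A hT p P v y hyI hyR
  have Ty' := telescope_id T S A hT p P v y' hyI' hyR'
  -- value of primal at y
  have eq_y : ∑ t, ∑ s, ∑ a, y t s a * u t s a = ∑ t, ∑ s, p t s * v t s := by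
    have hterm : ∀ (t : Fin T) (s : Fin S) (a : Fin A),
        y t s a * u t s a
          = y t s a * v t s - y t s a *
              (if h : (t : ℕ) + 1 < T then ∑ s', P s a s' * v ⟨(t : ℕ) + 1, h⟩ s' else 0) := by
      intro t s a
      rcases eq_or_lt_of_le (hy0 t s a) with h0 | h0
      · rw [← h0]; ring
      · rw [cs_eq t s a h0]; ring
    calc ∑ t, ∑ s, ∑ a, y t s a * u t s a
        = ∑ t, ∑ s, ∑ a, (y t s a * v t s - y t s a *
            (if h : (t : ℕ) + 1 < T then ∑ s', P s a s' * v ⟨(t : ℕ) + 1, h⟩ s' else 0)) := by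
          exact Finset.sum_congr rfl fun t _ => Finset.sum_congr rfl fun s _ =>
            Finset.sum_congr rfl fun a _ => hterm t s a
      _ = (∑ t, ∑ s, ∑ a, y t s a * v t s)
            - ∑ t, ∑ s, ∑ a, y t s a *
                (if h : (t : ℕ) + 1 < T then ∑ s', P s a s' * v ⟨(t : ℕ) + 1, h⟩ s' else 0) := by
          simp [Finset.sum_sub_distrib]
      _ = ∑ t, ∑ s, p t s * v t s := by rw [Ty]; ring
  -- bound at y'
  have ge_y' : ∑ t, ∑ s, p t s * v t s ≤ ∑ t, ∑ s, ∑ a, y' t s a * u t s a := by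
    have hterm : ∀ (t : Fin T) (s : Fin S) (a : Fin A),
        y' t s a * v t s - y' t s a *
            (if h : (t : ℕ) + 1 < T then ∑ s', P s a s' * v ⟨(t : ℕ) + 1, h⟩ s' else 0)
          ≤ y' t s a * u t s a := by
      intro t s a
      have := mul_le_mul_of_nonneg_left (dual_le t s a) (hy0' t s a)
      nlinarith [this]
    calc ∑ t, ∑ s, p t s * v t s
        = (∑ t, ∑ s, ∑ a, y' t s a * v t s)
            - ∑ t, ∑ s, ∑ a, y' t s a *
                (if h : (t : ℕ) + 1 < T then ∑ s', P s a s' * v ⟨(t : ℕ) + 1, h⟩ s' else 0) := by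
          rw [Ty']; ring
      _ = ∑ t, ∑ s, ∑ a, (y' t s a * v t s - y' t s a *
            (if h : (t : ℕ) + 1 < T then ∑ s', P s a s' * v ⟨(t : ℕ) + 1, h⟩ s' else 0)) := by
          simp [Finset.sum_sub_distrib]
      _ ≤ ∑ t, ∑ s, ∑ a, y' t s a * u t s a :=
          Finset.sum_le_sum fun t _ => Finset.sum_le_sum fun s _ =>
            Finset.sum_le_sum fun a _ => hterm t s a
  -- gradient inequality
  have hgrad : ∀ (t : Fin T) (s : Fin S) (a : Fin A),
      u t s a * (y' t s a - y t s a)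
        ≤ (∫ α in (0:ℝ)..(y' t s a), φ t s a α) - ∫ α in (0:ℝ)..(y t s a), φ t s a α := by
    intro t s a
    have h1 := integral_ge_mul (φ t s a) (hφc t s a) (hφm t s a) (y t s a) (y' t s a)
    have h2 : (∫ α in (0:ℝ)..(y' t s a), φ t s a α) - ∫ α in (0:ℝ)..(y t s a), φ t s a α
        = ∫ α in (y t s a)..(y' t s a), φ t s a α :=
      intervalIntegral.integral_interval_sub_left
        ((hφc t s a).intervalIntegrable 0 (y' t s a))
        ((hφc t s a).intervalIntegrable 0 (y t s a))
    rw [hu t s a, h2]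
    exact h1
  have sum_grad : ∑ t, ∑ s, ∑ a, u t s a * (y' t s a - y t s a)
      ≤ (∑ t, ∑ s, ∑ a, ∫ α in (0:ℝ)..(y' t s a), φ t s a α)
        - ∑ t, ∑ s, ∑ a, ∫ α in (0:ℝ)..(y t s a), φ t s a α := by
    calc ∑ t, ∑ s, ∑ a, u t s a * (y' t s a - y t s a)
        ≤ ∑ t, ∑ s, ∑ a, ((∫ α in (0:ℝ)..(y' t s a), φ t s a α)
            - ∫ α in (0:ℝ)..(y t s a), φ t s a α) :=
          Finset.sum_le_sum fun t _ => Finset.sum_le_sum fun s _ =>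
            Finset.sum_le_sum fun a _ => hgrad t s a
      _ = _ := by simp [Finset.sum_sub_distrib]
  have expand : ∑ t, ∑ s, ∑ a, u t s a * (y' t s a - y t s a)
      = (∑ t, ∑ s, ∑ a, y' t s a * u t s a) - ∑ t, ∑ s, ∑ a, y t s a * u t s a := by
    rw [← Finset.sum_sub_distrib]
    refine Finset.sum_congr rfl fun t _ => ?_
    rw [← Finset.sum_sub_distrib]
    refine Finset.sum_congr rfl fun s _ => ?_
    rw [← Finset.sum_sub_distrib]
    exact Finset.sum_congr rfl fun a _ => by ring
  linarith
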